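/- Let q be a natural number, c1 > 0, let r0 ∈ (0,1) be the unique zero of r ↦ arccos(r) - c1*r on (0,1), let 0 < h < ε with h/ε < r0, and set ε̂ := ε*arccos(h/ε) - c1*h. Then for every real t with ε̂ ≤ |t| ≤ (π/2)*ε one has cos(t/ε)^{2(q+1)} ≤ (1 + c1)^{2(q+1)} * (h/ε)^{2(q+1)}. -/

import Mathlib

/-- Let `q : ℕ`, `c1 > 0`, let `r0 ∈ (0,1)` be the unique zero of `r ↦ arccos r - c1 * r`
on `(0,1)`, let `0 < h < ε` with `h/ε < r0`, and set `ε̂ := ε * arccos (h/ε) - c1 * h`.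
Then for every real `t` with `ε̂ ≤ |t| ≤ (π/2) * ε` one has
`cos (t/ε) ^ (2*(q+1)) ≤ (1 + c1) ^ (2*(q+1)) * (h/ε) ^ (2*(q+1))`. -/
theorem stmt_3 (q : ℕ) (c1 : ℝ) (hc1 : 0 < c1) (r0 : ℝ) (hr0 : r0 ∈ Set.Ioo (0:ℝ) 1)
    (hr0zero : Real.arccos r0 - c1 * r0 = 0)
    (hr0unique : ∀ r ∈ Set.Ioo (0:ℝ) 1, Real.arccos r - c1 * r = 0 → r = r0)
    (h ε : ℝ) (hh : 0 < h) (hhε : h < ε) (hratio : h / ε < r0)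
    (εhat : ℝ) (hεhat : εhat = ε * Real.arccos (h / ε) - c1 * h)
    (t : ℝ) (ht1 : εhat ≤ |t|) (ht2 : |t| ≤ (Real.pi / 2) * ε) :
    Real.cos (t / ε) ^ (2 * (q + 1)) ≤
      (1 + c1) ^ (2 * (q + 1)) * (h / ε) ^ (2 * (q + 1)) := by
  have hε : (0:ℝ) < ε := hh.trans hhε
  set x : ℝ := h / ε with hxdef
  have hx0 : 0 < x := div_pos hh hε
  have hx1 : x < 1 := (div_lt_one hε).mpr hhε
  set a : ℝ := Real.arccos x with hadef
  set s : ℝ := |t| / ε with hsdef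
  have hs0 : 0 ≤ s := div_nonneg (abs_nonneg t) hε.le
  have hs2 : s ≤ Real.pi / 2 := by
    rw [hsdef, div_le_iff₀ hε]; linarith
  have hslb : a - c1 * x ≤ s := by
    rw [hsdef, le_div_iff₀ hε]
    have : c1 * x * ε = c1 * h := by
      rw [hxdef]; field_simp
    nlinarith [ht1, hεhat]
  have hcos : Real.cos s ≤ (1 + c1) * x := by
    rcases le_or_gt a s with hc | hc
    · have h1 : Real.cos s ≤ Real.cos a := by
        apply Real.cos_le_cos_of_nonneg_of_le_pi (Real.arccos_nonneg x) _ hc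
        linarith [Real.pi_pos]
      have h2 : Real.cos a = x := Real.cos_arccos (by linarith) hx1.le
      nlinarith
    · have h1 : Real.cos s - Real.cos a ≤ a - s := by
        have e := Real.cos_sub_cos s a
        have hu0 : 0 ≤ (a - s) / 2 := by linarith
        have hupi : (a - s) / 2 ≤ Real.pi := by
          have := Real.arccos_le_pi x
          linarith
        have e2 : Real.sin ((s - a) / 2) = - Real.sin ((a - s) / 2) := by
          rw [← Real.sin_neg]; ring_nf
        have hb1 : Real.sin ((s + a) / 2) ≤ 1 := Real.sin_le_one _
        have hb2 : 0 ≤ Real.sin ((a - s) / 2) :=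
          Real.sin_nonneg_of_nonneg_of_le_pi hu0 hupi
        have hb3 : Real.sin ((a - s) / 2) ≤ (a - s) / 2 := Real.sin_le hu0
        nlinarith
      have h2 : Real.cos a = x := Real.cos_arccos (by linarith) hx1.le
      have h3 : a - s ≤ c1 * x := by linarith
      nlinarith
  have hcosnn : 0 ≤ Real.cos s := by
    apply Real.cos_nonneg_of_mem_Icc
    constructor <;> [linarith [Real.pi_pos]; linarith]
  have hkey : Real.cos s ^ (2 * (q + 1)) ≤ ((1 + c1) * x) ^ (2 * (q + 1)) :=
    pow_le_pow_left₀ hcosnn hcos _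
  have habs : Real.cos (t / ε) = Real.cos s := by
    rw [hsdef, ← Real.cos_abs (t / ε), abs_div, abs_of_pos hε]
  rw [habs, ← mul_pow]
  exact hkey
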